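/- For any group G and any n ≥ 0, the quotient group G / G_r^{(n+1)} is poly-torsion-free-abelian (PTFA), i.e., it admits a finite normal series whose successive quotients are torsion-free abelian. -/

import Mathlib

/-- The rational derived series of a group `G`:
`G_r^(0) = G` and `G_r^(n+1)` is generated by the commutator subgroup of `G_r^(n)`
together with all elements of `G_r^(n)` having a nonzero integer power in that
commutator subgroup. -/
def ratDerivedSeries (G : Type*) [Group G] : ℕ → Subgroup G
  | 0 => ⊤
  | n + 1 =>
    let H := ratDerivedSeries G n
    Subgroup.closure ((⁅H, H⁆ : Subgroup G) ∪
      {g : G | g ∈ H ∧ ∃ k : ℤ, k ≠ 0 ∧ g ^ k ∈ (⁅H, H⁆ : Subgroup G)})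


/-- `Γ` admits a normal series `⊥ = Γ_0 ◁ Γ_1 ◁ ... ◁ Γ_m = Γ` of length `m` in which each
successive quotient `Γ_{k+1}/Γ_k` is torsion-free abelian (the abelianness is encoded by
commutators landing in the previous term, torsion-freeness by the root condition). -/
def IsPTFAOfLength (Γ : Type*) [Group Γ] (m : ℕ) : Prop :=
  ∃ s : ℕ → Subgroup Γ, s 0 = ⊥ ∧ s m = ⊤ ∧
    ∀ k < m, s k ≤ s (k + 1) ∧
      (∀ x ∈ s (k + 1), ∀ y ∈ s (k + 1), x * y * x⁻¹ * y⁻¹ ∈ s k) ∧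
      (∀ x ∈ s (k + 1), ∀ n : ℤ, n ≠ 0 → x ^ n ∈ s k → x ∈ s k)

/-- A group is poly-torsion-free-abelian (PTFA) if it admits a finite normal series with
torsion-free abelian successive quotients. -/
def IsPTFA (Γ : Type*) [Group Γ] : Prop := ∃ m : ℕ, IsPTFAOfLength Γ m

open scoped commutatorElement

section Aux
variable {G : Type*} [Group G]

lemma commutator_le_self' (H : Subgroup G) : (⁅H, H⁆ : Subgroup G) ≤ H :=
  Subgroup.commutator_le.mpr fun a ha b hb => by
    simpa [commutatorElement_def] using
      mul_mem (mul_mem (mul_mem ha hb) (inv_mem ha)) (inv_mem hb)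

lemma conj_mem_commutator' (H : Subgroup G) {g c : G} (hg : g ∈ H)
    (hc : c ∈ (⁅H, H⁆ : Subgroup G)) : g * c * g⁻¹ ∈ (⁅H, H⁆ : Subgroup G) := by
  have h1 : (⁅H, H⁆ : Subgroup G).map (MulAut.conj g).toMonoidHom ≤ ⁅H, H⁆ := by
    rw [Subgroup.map_commutator]
    apply Subgroup.commutator_mono <;>
    · intro x hx
      rcases Subgroup.mem_map.mp hx with ⟨a, ha, rfl⟩
      simpa using mul_mem (mul_mem hg ha) (inv_mem hg)
  simpa using h1 (Subgroup.mem_map_of_mem _ hc)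

lemma normal_commutator_subgroupOf (H : Subgroup G) :
    ((⁅H, H⁆ : Subgroup G).subgroupOf H).Normal := by
  constructor
  intro x hx g
  rw [Subgroup.mem_subgroupOf] at *
  simpa using conj_mem_commutator' H g.2 hx

def rootSubgroup (H : Subgroup G) : Subgroup G where
  carrier := {g : G | g ∈ H ∧ ∃ k : ℤ, k ≠ 0 ∧ g ^ k ∈ (⁅H, H⁆ : Subgroup G)}
  one_mem' := ⟨one_mem H, 1, one_ne_zero, by simpa using one_mem _⟩
  inv_mem' := by
    rintro a ⟨haH, k, hk, hka⟩
    exact ⟨inv_mem haH, k, hk, by simpa [inv_zpow] using inv_mem hka⟩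
  mul_mem' := by
    rintro a b ⟨haH, j, hj, hja⟩ ⟨hbH, k, hk, hkb⟩
    refine ⟨mul_mem haH hbH, j * k, mul_ne_zero hj hk, ?_⟩
    haveI : ((⁅H, H⁆ : Subgroup G).subgroupOf H).Normal := normal_commutator_subgroupOf H
    set C := (⁅H, H⁆ : Subgroup G).subgroupOf H
    let π := QuotientGroup.mk' C
    have hcomm : ∀ x y : H, Commute (π x) (π y) := by
      intro x y
      have h1 : π ⁅x, y⁆ = 1 := by
        rw [QuotientGroup.mk'_apply, QuotientGroup.eq_one_iff]
        rw [Subgroup.mem_subgroupOf]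
        exact Subgroup.commutator_mem_commutator x.2 y.2
      have h2 : ⁅x, y⁆ * (y * x) = x * y := by
        simp [commutatorElement_def, mul_assoc]
      have := congrArg π h2
      rw [map_mul, h1, one_mul, map_mul, map_mul] at this
      exact this.symm
    set a' : H := ⟨a, haH⟩
    set b' : H := ⟨b, hbH⟩
    have hπa : (π a') ^ (j * k) = 1 := by
      have : (π a') ^ j = 1 := by
        rw [← map_zpow, QuotientGroup.mk'_apply, QuotientGroup.eq_one_iff,
          Subgroup.mem_subgroupOf]
        simpa using hja
      rw [zpow_mul, this, one_zpow]
    have hπb : (π b') ^ (j * k) = 1 := by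
      have : (π b') ^ k = 1 := by
        rw [← map_zpow, QuotientGroup.mk'_apply, QuotientGroup.eq_one_iff,
          Subgroup.mem_subgroupOf]
        simpa using hkb
      rw [mul_comm, zpow_mul, this, one_zpow]
    have key : π ((a' * b') ^ (j * k)) = 1 := by
      rw [map_zpow, map_mul, (hcomm a' b').mul_zpow, hπa, hπb, one_mul]
    rw [QuotientGroup.mk'_apply, QuotientGroup.eq_one_iff, Subgroup.mem_subgroupOf] at key
    simpa using key

lemma ratDerivedSeries_succ_eq (G : Type*) [Group G] (m : ℕ) :
    ratDerivedSeries G (m + 1) = rootSubgroup (ratDerivedSeries G m) := by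
  set H := ratDerivedSeries G m
  have hdef : ratDerivedSeries G (m + 1) = Subgroup.closure
      ((⁅H, H⁆ : Subgroup G) ∪
        {g : G | g ∈ H ∧ ∃ k : ℤ, k ≠ 0 ∧ g ^ k ∈ (⁅H, H⁆ : Subgroup G)}) := rfl
  rw [hdef]
  apply le_antisymm
  · rw [Subgroup.closure_le]
    rintro g (hg | hg)
    · exact ⟨commutator_le_self' H hg, 1, one_ne_zero, by simpa using hg⟩
    · exact hg
  · intro g hg
    exact Subgroup.subset_closure (Or.inr hg)

lemma ratDerivedSeries_antitone (G : Type*) [Group G] : Antitone (ratDerivedSeries G) := by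
  apply antitone_nat_of_succ_le
  intro m
  rw [ratDerivedSeries_succ_eq]
  intro g hg
  exact hg.1

end Aux

theorem quotient_ratDerivedSeries_isPTFA (G : Type*) [Group G] (n : ℕ)
    [hN : (ratDerivedSeries G (n + 1)).Normal] :
    IsPTFA (G ⧸ ratDerivedSeries G (n + 1)) := by
  set N := ratDerivedSeries G (n + 1) with hNdef
  let π := QuotientGroup.mk' N
  refine ⟨n + 1, fun k => Subgroup.map π (ratDerivedSeries G (n + 1 - k)), ?_, ?_, ?_⟩
  · -- s 0 = ⊥
    apply le_antisymm _ bot_le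
    intro x hx
    rcases Subgroup.mem_map.mp hx with ⟨a, ha, rfl⟩
    rw [Subgroup.mem_bot]
    exact (QuotientGroup.eq_one_iff a).mpr ha
  · -- s (n+1) = ⊤
    show Subgroup.map π (ratDerivedSeries G (n + 1 - (n + 1))) = ⊤
    rw [Nat.sub_self]
    show Subgroup.map π (⊤ : Subgroup G) = ⊤
    rw [← MonoidHom.range_eq_map]
    exact MonoidHom.range_eq_top_of_surjective π (QuotientGroup.mk'_surjective N)
  · intro k hk
    have hkn : k ≤ n := Nat.lt_succ_iff.mp hk
    set i := n - k with hi
    have e3 : n + 1 - k = i + 1 := by omega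
    have e4 : n + 1 - (k + 1) = i := by omega
    refine ⟨?_, ?_, ?_⟩
    · exact Subgroup.map_mono (ratDerivedSeries_antitone G (by omega))
    · rintro x hx y hy
      rcases Subgroup.mem_map.mp hx with ⟨a, ha, rfl⟩
      rcases Subgroup.mem_map.mp hy with ⟨b, hb, rfl⟩
      rw [e4] at ha hb
      have hc : ⁅a, b⁆ ∈ ratDerivedSeries G (i + 1) := by
        rw [ratDerivedSeries_succ_eq]
        exact ⟨commutator_le_self' _ (Subgroup.commutator_mem_commutator ha hb),
          1, one_ne_zero, by simpa using Subgroup.commutator_mem_commutator ha hb⟩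
      show π a * π b * (π a)⁻¹ * (π b)⁻¹ ∈ Subgroup.map π (ratDerivedSeries G (n + 1 - k))
      rw [e3]
      have := Subgroup.mem_map_of_mem π hc
      simpa [commutatorElement_def, map_mul, map_inv] using this
    · rintro x hx m hm hxm
      rcases Subgroup.mem_map.mp hx with ⟨a, ha, rfl⟩
      rcases Subgroup.mem_map.mp hxm with ⟨b, hb, hbe⟩
      rw [e4] at ha
      rw [e3] at hb
      have hker : (a ^ m)⁻¹ * b ∈ N := by
        have h1 : π ((a ^ m)⁻¹ * b) = 1 := by
          rw [map_mul, map_inv, map_zpow, hbe, inv_mul_cancel]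
        rwa [QuotientGroup.mk'_apply, QuotientGroup.eq_one_iff] at h1
      have hNle : N ≤ ratDerivedSeries G (i + 1) :=
        ratDerivedSeries_antitone G (by omega)
      have ham : a ^ m ∈ ratDerivedSeries G (i + 1) := by
        have h2 : b * ((a ^ m)⁻¹ * b)⁻¹ ∈ ratDerivedSeries G (i + 1) :=
          mul_mem hb (inv_mem (hNle hker))
        simpa [mul_assoc] using h2
      rw [ratDerivedSeries_succ_eq] at ham
      obtain ⟨-, t, ht, hta⟩ := ham
      have haa : a ∈ ratDerivedSeries G (i + 1) := by
        rw [ratDerivedSeries_succ_eq]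
        exact ⟨ha, m * t, mul_ne_zero hm ht, by rwa [zpow_mul]⟩
      show π a ∈ Subgroup.map π (ratDerivedSeries G (n + 1 - k))
      rw [e3]
      exact Subgroup.mem_map_of_mem π haa
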